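/- Let H be a 3-uniform hypergraph on n vertices with minimum codegree strictly greater than n/(r+1), for an integer r ≥ 3. Then every vertex of H meets at most r tight components. -/

import Mathlib

open Finset

/-- Two edges are in the same tight component of the `3`-uniform hypergraph with edge
set `E` iff they are related by the reflexive-transitive closure of the relation
"both are edges and they share exactly 2 vertices". -/
def TightRel {V : Type*} [DecidableEq V] (E : Finset (Finset V)) :
    Finset V → Finset V → Prop :=
  Relation.ReflTransGen (fun e f => e ∈ E ∧ f ∈ E ∧ (e ∩ f).card = 2)

private lemma triple_distinct {V : Type*} [DecidableEq V] {a b c : V}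
    (h : ({a, b, c} : Finset V).card = 3) : a ≠ b ∧ a ≠ c ∧ b ≠ c := by
  refine ⟨?_, ?_, ?_⟩ <;> rintro rfl
  · have hsub : ({a, a, c} : Finset V) ⊆ {a, c} := by intro z hz; simp at hz ⊢; tauto
    have h1 := Finset.card_le_card hsub
    have h2 := Finset.card_insert_le a ({c} : Finset V)
    simp at h2; omega
  · have hsub : ({a, b, a} : Finset V) ⊆ {a, b} := by intro z hz; simp at hz ⊢; tauto
    have h1 := Finset.card_le_card hsub
    have h2 := Finset.card_insert_le a ({b} : Finset V)
    simp at h2; omega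
  · have hsub : ({a, b, b} : Finset V) ⊆ {a, b} := by intro z hz; simp at hz ⊢; tauto
    have h1 := Finset.card_le_card hsub
    have h2 := Finset.card_insert_le a ({b} : Finset V)
    simp at h2; omega

private lemma tightRel_symm {V : Type*} [DecidableEq V] (E : Finset (Finset V)) :
    Symmetric (TightRel E) := by
  refine fun a b h => (@Relation.ReflTransGen.symmetric _
    (fun e f => e ∈ E ∧ f ∈ E ∧ (e ∩ f).card = 2) ⟨?_⟩).symm a b h
  rintro e f ⟨he, hf, h⟩
  exact ⟨hf, he, by rwa [Finset.inter_comm]⟩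

/-- Two 3-edges sharing two distinct vertices are tightly related. -/
private lemma tight_share {V : Type*} [DecidableEq V] {E : Finset (Finset V)}
    (hunif : ∀ e ∈ E, e.card = 3) {e g : Finset V} (he : e ∈ E) (hg : g ∈ E)
    {a b : V} (hab : a ≠ b) (hae : a ∈ e) (hbe : b ∈ e) (hag : a ∈ g) (hbg : b ∈ g) :
    TightRel E e g := by
  rcases eq_or_ne e g with rfl | hne
  · exact Relation.ReflTransGen.refl
  have hsub : ({a, b} : Finset V) ⊆ e ∩ g := by
    intro z hz; simp at hz; rcases hz with rfl | rfl <;> simp [Finset.mem_inter, *]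
  have hcard2 : ({a, b} : Finset V).card = 2 := by
    rw [Finset.card_insert_of_notMem (by simpa using hab), Finset.card_singleton]
  have h2 : 2 ≤ (e ∩ g).card := hcard2 ▸ Finset.card_le_card hsub
  have h3 : (e ∩ g).card ≤ 3 := by
    have := Finset.card_le_card ((Finset.inter_subset_left : e ∩ g ⊆ e))
    rwa [hunif e he] at this
  have hne3 : (e ∩ g).card ≠ 3 := by
    intro h33
    have heq : e ∩ g = e :=
      Finset.eq_of_subset_of_card_le Finset.inter_subset_left (by rw [hunif e he, h33])
    have heg : e ⊆ g := heq ▸ Finset.inter_subset_right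
    exact hne (Finset.eq_of_subset_of_card_le heg (by rw [hunif e he, hunif g hg]))
  exact Relation.ReflTransGen.single ⟨he, hg, by omega⟩

/-- If a 3-uniform hypergraph on `n` vertices has minimum codegree strictly greater than
`n/(r+1)` for an integer `r ≥ 3`, then every vertex meets at most `r` tight components:
any family of pairwise non-equivalent edges all containing a fixed vertex has size at
most `r`. -/
theorem stmt5 {V : Type*} [Fintype V] [DecidableEq V] (E : Finset (Finset V))
    (r : ℕ) (hr : 3 ≤ r)
    (hunif : ∀ e ∈ E, e.card = 3)
    (hcod : ∀ u v : V, u ≠ v →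
      (Fintype.card V : ℚ) / ((r : ℚ) + 1) <
        ((Finset.univ.filter (fun w => ({u, v, w} : Finset V) ∈ E)).card : ℚ)) :
    ∀ x : V, ∀ S : Finset (Finset V), S ⊆ E → (∀ e ∈ S, x ∈ e) →
      (∀ e ∈ S, ∀ f ∈ S, e ≠ f → ¬ TightRel E e f) → S.card ≤ r := by
  classical
  intro x S hSE hxS hS
  rcases S.eq_empty_or_nonempty with rfl | hSne
  · simpa using Nat.zero_le r
  set n := Fintype.card V with hn
  -- choose, for each edge in S, a second vertex besides x
  have hpick : ∀ e ∈ S, ∃ z, z ∈ e ∧ z ≠ x := by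
    intro e heS
    have h3 : e.card = 3 := hunif e (hSE heS)
    have hne : (e.erase x).Nonempty := by
      rw [← Finset.card_pos, Finset.card_erase_of_mem (hxS e heS), h3]; norm_num
    obtain ⟨z, hz⟩ := hne
    exact ⟨z, Finset.mem_of_mem_erase hz, Finset.ne_of_mem_erase hz⟩
  have : Nonempty V := ⟨x⟩
  choose! y hy hyx using hpick
  set W : Finset V → Finset V :=
    fun e => Finset.univ.filter (fun w => ({x, y e, w} : Finset V) ∈ E) with hW
  -- extensions of the pair {x, y e} stay in e's tight component
  have key : ∀ e ∈ S, ∀ w ∈ W e,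
      ({x, y e, w} : Finset V) ∈ E ∧ x ≠ w ∧ TightRel E e {x, y e, w} := by
    intro e heS w hw
    have hgE : ({x, y e, w} : Finset V) ∈ E := by
      simpa [hW] using hw
    have h3 := hunif _ hgE
    obtain ⟨hxy, hxw, hyw⟩ := triple_distinct h3
    refine ⟨hgE, hxw, ?_⟩
    exact tight_share hunif (hSE heS) hgE hxy (hxS e heS) (hy e heS)
      (by simp) (by simp)
  -- the sets W e are pairwise disjoint over S
  have hdisj : ∀ e ∈ S, ∀ f ∈ S, e ≠ f → Disjoint (W e) (W f) := by
    intro e heS f hfS hef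
    rw [Finset.disjoint_left]
    intro w hwe hwf
    obtain ⟨hg1, hxw, ht1⟩ := key e heS w hwe
    obtain ⟨hg2, _, ht2⟩ := key f hfS w hwf
    have ht3 : TightRel E {x, y e, w} {x, y f, w} :=
      tight_share hunif hg1 hg2 hxw (by simp) (by simp) (by simp) (by simp)
    exact hS e heS f hfS hef (ht1.trans (ht3.trans (tightRel_symm E ht2)))
  -- counting
  have hcount : ∑ e ∈ S, (W e).card ≤ n := by
    rw [← Finset.card_biUnion hdisj]
    exact Finset.card_le_card (Finset.subset_univ _)
  have hlow : ∀ e ∈ S, (n : ℚ) / ((r : ℚ) + 1) < ((W e).card : ℚ) := by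
    intro e heS
    exact hcod x (y e) (hyx e heS).symm
  have hsum : (S.card : ℚ) * ((n : ℚ) / ((r : ℚ) + 1)) < ∑ e ∈ S, ((W e).card : ℚ) := by
    have := Finset.sum_lt_sum_of_nonempty hSne hlow
    simpa [Finset.sum_const, nsmul_eq_mul] using this
  have hsum2 : (∑ e ∈ S, ((W e).card : ℚ)) ≤ (n : ℚ) := by
    rw [← Nat.cast_sum]
    exact_mod_cast hcount
  have hn1 : 1 ≤ n := by
    obtain ⟨e, heS⟩ := hSne
    have hlt := hlow e heS
    have h0 : (0 : ℚ) ≤ (n : ℚ) / ((r : ℚ) + 1) := by positivity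
    have hpos : 0 < (W e).card := by exact_mod_cast h0.trans_lt hlt
    obtain ⟨w, _⟩ := Finset.card_pos.mp hpos
    exact Fintype.card_pos_iff.mpr ⟨w⟩
  have hr1 : (0 : ℚ) < (r : ℚ) + 1 := by positivity
  have hnq : (1 : ℚ) ≤ (n : ℚ) := by exact_mod_cast hn1
  have hmain : (S.card : ℚ) * ((n : ℚ) / ((r : ℚ) + 1)) < (n : ℚ) := hsum.trans_le hsum2
  have h1 : (S.card : ℚ) * (n : ℚ) < (n : ℚ) * ((r : ℚ) + 1) := by
    rw [← mul_div_assoc] at hmain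
    exact (div_lt_iff₀ hr1).mp hmain
  have h2 : (S.card : ℚ) < (r : ℚ) + 1 := by
    have hn0 : (0 : ℚ) < (n : ℚ) := by linarith
    exact lt_of_mul_lt_mul_right (by linarith) hn0.le
  have : S.card < r + 1 := by exact_mod_cast h2
  omega
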